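/- arXiv:1508.06445 — 2 statements merged into one kernel-verified Lean document; each statement's English description precedes it below -/
import Mathlib

section
/- Let K be a triangle with counterclockwise vertices z_r, z_s, z_t, barycentric coordinates λ_r, λ_s, λ_t, and let E_ℓ be the edge from z_s to z_t with unit normal n_{E_ℓ} = (y_t−y_s, x_s−x_t)/|E_ℓ|. Define φ_{ℓ,1} = λ_s ∇^⊥ λ_t and φ_{ℓ,2} = −λ_t ∇^⊥ λ_s on K. Then on E_ℓ, φ_{ℓ,1}·n_{E_ℓ} = λ_s/|E_ℓ| and φ_{ℓ,2}·n_{E_ℓ} = λ_t/|E_ℓ|, while on each of the other two edges of K the normal components of φ_{ℓ,1} and φ_{ℓ,2} vanish identically. -/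
/-- If two vectors are both orthogonal to a nonzero vector `(d1, d2)` in the plane,
their "cross" determinant vanishes. -/
lemma perp_aux (d1 d2 n1 n2 a b : ℝ) (hd : d1 ≠ 0 ∨ d2 ≠ 0)
    (h1 : n1 * d1 + n2 * d2 = 0) (h2 : a * d1 + b * d2 = 0) :
    n1 * b - n2 * a = 0 := by
  have hpos : 0 < d1 ^ 2 + d2 ^ 2 := by rcases hd with h | h <;> positivity
  have key : (n1 * b - n2 * a) * (d1 ^ 2 + d2 ^ 2) = 0 := by
    linear_combination (b * d1 - a * d2) * h1 + (n1 * d2 - n2 * d1) * h2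
  rcases mul_eq_zero.mp key with h | h
  · exact h
  · exact absurd h hpos.ne'

/-- An affine function vanishing at two points vanishes on their segment. -/
lemma lam_seg (a b c u v x0 y0 x1 y1 : ℝ) (huv : u + v = 1)
    (h0 : a * x0 + b * y0 + c = 0) (h1 : a * x1 + b * y1 + c = 0) :
    a * (u * x0 + v * x1) + b * (u * y0 + v * y1) + c = 0 := by
  linear_combination u * h0 + v * h1 - c * huv

/-- Normal components of the BDM1 edge basis functions
φ_{ℓ,1} = λ_s ∇^⊥ λ_t and φ_{ℓ,2} = -λ_t ∇^⊥ λ_s on the three edges of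
a triangle with counterclockwise vertices z_r = z 0, z_s = z 1, z_t = z 2.
On E_ℓ = [z_s, z_t]: λ_s/|E_ℓ| resp. λ_t/|E_ℓ|; on the other two edges they
vanish identically. -/
theorem bdm_basis_normal_components
    (z : Fin 3 → ℝ × ℝ)
    (areaK : ℝ)
    (harea : areaK = (((z 1).1 - (z 0).1) * ((z 2).2 - (z 0).2)
        - ((z 2).1 - (z 0).1) * ((z 1).2 - (z 0).2)) / 2)
    (hccw : 0 < areaK)
    (a b c : Fin 3 → ℝ)
    (lam : Fin 3 → ℝ × ℝ → ℝ)
    (hlam : ∀ i p, lam i p = a i * p.1 + b i * p.2 + c i)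
    (hinterp : ∀ i j, lam i (z j) = if i = j then 1 else 0)
    (phi1 phi2 : ℝ × ℝ → ℝ × ℝ)
    (hphi1 : ∀ p, phi1 p = lam 1 p • ((b 2, -(a 2)) : ℝ × ℝ))
    (hphi2 : ∀ p, phi2 p = -(lam 2 p) • ((b 1, -(a 1)) : ℝ × ℝ))
    (lenE : ℝ) (hlen : lenE = ‖z 2 - z 1‖)
    (nE : ℝ × ℝ)
    (hn : nE = (1 / lenE) • (((z 2).2 - (z 1).2, (z 1).1 - (z 2).1) : ℝ × ℝ))
    (nErs nEtr : ℝ × ℝ) (hnrs : ‖nErs‖ = 1) (hntr : ‖nEtr‖ = 1)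
    (hnrsperp : nErs.1 * ((z 1).1 - (z 0).1) + nErs.2 * ((z 1).2 - (z 0).2) = 0)
    (hntrperp : nEtr.1 * ((z 0).1 - (z 2).1) + nEtr.2 * ((z 0).2 - (z 2).2) = 0) :
    (∀ p ∈ segment ℝ (z 1) (z 2),
        (phi1 p).1 * nE.1 + (phi1 p).2 * nE.2 = lam 1 p / lenE ∧
        (phi2 p).1 * nE.1 + (phi2 p).2 * nE.2 = lam 2 p / lenE) ∧
    (∀ p ∈ segment ℝ (z 0) (z 1),
        (phi1 p).1 * nErs.1 + (phi1 p).2 * nErs.2 = 0 ∧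
        (phi2 p).1 * nErs.1 + (phi2 p).2 * nErs.2 = 0) ∧
    (∀ p ∈ segment ℝ (z 2) (z 0),
        (phi1 p).1 * nEtr.1 + (phi1 p).2 * nEtr.2 = 0 ∧
        (phi2 p).1 * nEtr.1 + (phi2 p).2 * nEtr.2 = 0) := by
  -- scalar interpolation identities
  have hval : ∀ i j : Fin 3,
      a i * (z j).1 + b i * (z j).2 + c i = if i = j then 1 else 0 := by
    intro i j
    rw [← hlam]
    exact hinterp i j
  have h10 : a 1 * (z 0).1 + b 1 * (z 0).2 + c 1 = 0 := by simpa using hval 1 0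
  have h11 : a 1 * (z 1).1 + b 1 * (z 1).2 + c 1 = 1 := by simpa using hval 1 1
  have h12 : a 1 * (z 2).1 + b 1 * (z 2).2 + c 1 = 0 := by simpa using hval 1 2
  have h20 : a 2 * (z 0).1 + b 2 * (z 0).2 + c 2 = 0 := by simpa using hval 2 0
  have h21 : a 2 * (z 1).1 + b 2 * (z 1).2 + c 2 = 0 := by simpa using hval 2 1
  have h22 : a 2 * (z 2).1 + b 2 * (z 2).2 + c 2 = 1 := by simpa using hval 2 2
  -- nondegeneracy of the two edges incident to z 0 and z 1
  have hdrs : (z 1).1 - (z 0).1 ≠ 0 ∨ (z 1).2 - (z 0).2 ≠ 0 := by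
    by_contra h
    push_neg at h
    have : areaK = 0 := by
      linear_combination harea + (((z 2).2 - (z 0).2) / 2) * h.1
        - (((z 2).1 - (z 0).1) / 2) * h.2
    linarith
  have hdtr : (z 0).1 - (z 2).1 ≠ 0 ∨ (z 0).2 - (z 2).2 ≠ 0 := by
    by_contra h
    push_neg at h
    have : areaK = 0 := by
      linear_combination harea + (((z 1).2 - (z 0).2) / 2) * h.1
        - (((z 1).1 - (z 0).1) / 2) * h.2
    linarith
  refine ⟨?_, ?_, ?_⟩
  · intro p _
    constructor
    · rw [hphi1, hn]
      simp only [Prod.smul_fst, Prod.smul_snd, smul_eq_mul]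
      have key : a 2 * ((z 2).1 - (z 1).1) + b 2 * ((z 2).2 - (z 1).2) = 1 := by
        linarith [h22, h21]
      field_simp
      linear_combination (lam 1 p * lenE⁻¹) * key
    · rw [hphi2, hn]
      simp only [Prod.smul_fst, Prod.smul_snd, smul_eq_mul]
      have key : a 1 * ((z 2).1 - (z 1).1) + b 1 * ((z 2).2 - (z 1).2) = -1 := by
        linarith [h12, h11]
      field_simp
      linear_combination (-(lam 2 p) * lenE⁻¹) * key
  · rintro p ⟨u, v, hu, hv, huv, rfl⟩
    constructor
    · rw [hphi1]
      simp only [Prod.smul_fst, Prod.smul_snd, smul_eq_mul]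
      have hgrad : a 2 * ((z 1).1 - (z 0).1) + b 2 * ((z 1).2 - (z 0).2) = 0 := by
        linarith [h21, h20]
      have := perp_aux ((z 1).1 - (z 0).1) ((z 1).2 - (z 0).2) nErs.1 nErs.2
        (a 2) (b 2) hdrs hnrsperp hgrad
      linear_combination (lam 1 (u • z 0 + v • z 1)) * this
    · rw [hphi2]
      simp only [Prod.smul_fst, Prod.smul_snd, smul_eq_mul]
      have hzero : lam 2 (u • z 0 + v • z 1) = 0 := by
        rw [hlam]
        simp only [Prod.fst_add, Prod.snd_add, Prod.smul_fst, Prod.smul_snd, smul_eq_mul]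
        exact lam_seg (a 2) (b 2) (c 2) u v _ _ _ _ huv h20 h21
      rw [hzero]; ring
  · rintro p ⟨u, v, hu, hv, huv, rfl⟩
    constructor
    · rw [hphi1]
      simp only [Prod.smul_fst, Prod.smul_snd, smul_eq_mul]
      have hzero : lam 1 (u • z 2 + v • z 0) = 0 := by
        rw [hlam]
        simp only [Prod.fst_add, Prod.snd_add, Prod.smul_fst, Prod.smul_snd, smul_eq_mul]
        exact lam_seg (a 1) (b 1) (c 1) u v _ _ _ _ huv h12 h10
      rw [hzero]; ring
    · rw [hphi2]
      simp only [Prod.smul_fst, Prod.smul_snd, smul_eq_mul]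
      have hgrad : a 1 * ((z 0).1 - (z 2).1) + b 1 * ((z 0).2 - (z 2).2) = 0 := by
        linarith [h10, h12]
      have := perp_aux ((z 0).1 - (z 2).1) ((z 0).2 - (z 2).2) nEtr.1 nEtr.2
        (a 1) (b 1) hdtr hntrperp hgrad
      linear_combination (-(lam 2 (u • z 2 + v • z 0))) * this
end

section
/- Let E_ℓ be an interior edge from z_s to z_t shared by triangles K⁻ and K⁺ as above, with φ_{ℓ,1}, φ_{ℓ,2} defined piecewise on K⁻ ∪ K⁺ by φ_{ℓ,1} = λ_s ∇^⊥ λ_t, φ_{ℓ,2} = −λ_t ∇^⊥ λ_s (barycentric coordinates of the respective triangle), and extended by zero elsewhere. Then the normal component of φ_{ℓ,k} (k = 1, 2) across the edge E_ℓ is the same from both sides: the trace of φ_{ℓ,1}·n_{E_ℓ} from K⁻ equals the trace from K⁺, both equal to λ_s/|E_ℓ|, and similarly for φ_{ℓ,2} with λ_t/|E_ℓ|. -/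
/-- Continuity of the normal component of the piecewise BDM basis fields
across the shared edge E_ℓ = [z_s, z_t]: the traces from K⁻ and K⁺ agree and
equal λ_s/|E_ℓ| (for φ_{ℓ,1}) resp. λ_t/|E_ℓ| (for φ_{ℓ,2}). -/
theorem bdm_normal_trace_continuity
    (zrm zrp zs zt : ℝ × ℝ)
    (areaM areaP : ℝ)
    (hareaM : areaM = ((zs.1 - zrm.1) * (zt.2 - zrm.2)
        - (zt.1 - zrm.1) * (zs.2 - zrm.2)) / 2)
    (hccwM : 0 < areaM)
    (hareaP : areaP = ((zt.1 - zrp.1) * (zs.2 - zrp.2)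
        - (zs.1 - zrp.1) * (zt.2 - zrp.2)) / 2)
    (hccwP : 0 < areaP)
    (am bm cm : Fin 3 → ℝ) (lamM : Fin 3 → ℝ × ℝ → ℝ)
    (hlamM : ∀ i p, lamM i p = am i * p.1 + bm i * p.2 + cm i)
    (hinterpM : ∀ i j, lamM i (![zrm, zs, zt] j) = if i = j then 1 else 0)
    (ap bp cp : Fin 3 → ℝ) (lamP : Fin 3 → ℝ × ℝ → ℝ)
    (hlamP : ∀ i p, lamP i p = ap i * p.1 + bp i * p.2 + cp i)
    (hinterpP : ∀ i j, lamP i (![zrp, zt, zs] j) = if i = j then 1 else 0)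
    (phi1M phi2M phi1P phi2P : ℝ × ℝ → ℝ × ℝ)
    (hphi1M : ∀ p, phi1M p = lamM 1 p • ((bm 2, -(am 2)) : ℝ × ℝ))
    (hphi2M : ∀ p, phi2M p = -(lamM 2 p) • ((bm 1, -(am 1)) : ℝ × ℝ))
    (hphi1P : ∀ p, phi1P p = lamP 2 p • ((bp 1, -(ap 1)) : ℝ × ℝ))
    (hphi2P : ∀ p, phi2P p = -(lamP 1 p) • ((bp 2, -(ap 2)) : ℝ × ℝ))
    (lenE : ℝ) (hlen : lenE = ‖zt - zs‖)
    (nE : ℝ × ℝ)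
    (hn : nE = (1 / lenE) • ((zt.2 - zs.2, zs.1 - zt.1) : ℝ × ℝ)) :
    ∀ p ∈ segment ℝ zs zt,
      -- the barycentric traces agree on the edge
      lamM 1 p = lamP 2 p ∧ lamM 2 p = lamP 1 p ∧
      -- traces of the normal component of φ_{ℓ,1} from both sides
      (phi1M p).1 * nE.1 + (phi1M p).2 * nE.2 = lamM 1 p / lenE ∧
      (phi1P p).1 * nE.1 + (phi1P p).2 * nE.2 = lamM 1 p / lenE ∧
      -- traces of the normal component of φ_{ℓ,2} from both sides
      (phi2M p).1 * nE.1 + (phi2M p).2 * nE.2 = lamM 2 p / lenE ∧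
      (phi2P p).1 * nE.1 + (phi2P p).2 * nE.2 = lamM 2 p / lenE := by

  intro p hp
  obtain ⟨a, b, ha, hb, hab, hpab⟩ := hp
  have hp1 : p.1 = a * zs.1 + b * zt.1 := by
    rw [← hpab]; simp [smul_eq_mul]
  have hp2 : p.2 = a * zs.2 + b * zt.2 := by
    rw [← hpab]; simp [smul_eq_mul]
  -- interpolation values
  have hM1s : lamM 1 zs = 1 := by have := hinterpM 1 1; simpa using this
  have hM1t : lamM 1 zt = 0 := by have := hinterpM 1 2; simpa using this
  have hM2s : lamM 2 zs = 0 := by have := hinterpM 2 1; simpa using this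
  have hM2t : lamM 2 zt = 1 := by have := hinterpM 2 2; simpa using this
  have hP1t : lamP 1 zt = 1 := by have := hinterpP 1 1; simpa using this
  have hP1s : lamP 1 zs = 0 := by have := hinterpP 1 2; simpa using this
  have hP2t : lamP 2 zt = 0 := by have := hinterpP 2 1; simpa using this
  have hP2s : lamP 2 zs = 1 := by have := hinterpP 2 2; simpa using this
  -- affine interpolation along the segment
  have affM : ∀ i : Fin 3, lamM i p = a * lamM i zs + b * lamM i zt := by
    intro i
    rw [hlamM, hlamM, hlamM, hp1, hp2]
    linear_combination (-(cm i)) * hab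
  have affP : ∀ i : Fin 3, lamP i p = a * lamP i zs + b * lamP i zt := by
    intro i
    rw [hlamP, hlamP, hlamP, hp1, hp2]
    linear_combination (-(cp i)) * hab
  have hM1p : lamM 1 p = a := by rw [affM 1, hM1s, hM1t]; ring
  have hM2p : lamM 2 p = b := by rw [affM 2, hM2s, hM2t]; ring
  have hP1p : lamP 1 p = b := by rw [affP 1, hP1s, hP1t]; ring
  have hP2p : lamP 2 p = a := by rw [affP 2, hP2s, hP2t]; ring
  -- tangential increments
  have hSm2 : am 2 * (zt.1 - zs.1) + bm 2 * (zt.2 - zs.2) = 1 := by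
    have h1 := hlamM 2 zt
    have h2 := hlamM 2 zs
    rw [hM2t] at h1; rw [hM2s] at h2
    linear_combination -h1 + h2
  have hSm1 : am 1 * (zt.1 - zs.1) + bm 1 * (zt.2 - zs.2) = -1 := by
    have h1 := hlamM 1 zt
    have h2 := hlamM 1 zs
    rw [hM1t] at h1; rw [hM1s] at h2
    linear_combination -h1 + h2
  have hSp1 : ap 1 * (zt.1 - zs.1) + bp 1 * (zt.2 - zs.2) = 1 := by
    have h1 := hlamP 1 zt
    have h2 := hlamP 1 zs
    rw [hP1t] at h1; rw [hP1s] at h2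
    linear_combination -h1 + h2
  have hSp2 : ap 2 * (zt.1 - zs.1) + bp 2 * (zt.2 - zs.2) = -1 := by
    have h1 := hlamP 2 zt
    have h2 := hlamP 2 zs
    rw [hP2t] at h1; rw [hP2s] at h2
    linear_combination -h1 + h2
  refine ⟨by rw [hM1p, hP2p], by rw [hM2p, hP1p], ?_, ?_, ?_, ?_⟩
  · rw [hphi1M, hn]
    simp only [Prod.smul_fst, Prod.smul_snd, smul_eq_mul]
    linear_combination (lamM 1 p * (1 / lenE)) * hSm2
  · rw [hphi1P, hn, hM1p, ← hP2p]
    simp only [Prod.smul_fst, Prod.smul_snd, smul_eq_mul]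
    linear_combination (lamP 2 p * (1 / lenE)) * hSp1
  · rw [hphi2M, hn]
    simp only [Prod.smul_fst, Prod.smul_snd, smul_eq_mul]
    linear_combination (-(lamM 2 p * (1 / lenE))) * hSm1
  · rw [hphi2P, hn, hM2p, ← hP1p]
    simp only [Prod.smul_fst, Prod.smul_snd, smul_eq_mul]
    linear_combination (-(lamP 1 p * (1 / lenE))) * hSp2
end
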